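/- Singularity bound for the free graphene propagator at half filling: there exist ε > 0 and C > 0 (depending only on t) such that for each sign ±, all k₀ ∈ ℝ and all k' ∈ ℝ² with |k'| ≤ ε and (k₀, k') ≠ (0,0), the 2×2 matrix i k₀·𝟙 − Ĥ⁰(k_F^± + k') is invertible and its inverse satisfies the operator-norm bound ‖(i k₀·𝟙 − Ĥ⁰(k_F^± + k'))⁻¹‖ ≤ C (k₀² + |k'|²)^{−1/2}. -/

import Mathlib

open Real Complex

/-- The dot product of two vectors in `ℝ²`. -/
noncomputable def dot (k l : EuclideanSpace ℝ (Fin 2)) : ℝ := k 0 * l 0 + k 1 * l 1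

/-- First basis vector of the triangular lattice. -/
noncomputable def ell1 : EuclideanSpace ℝ (Fin 2) := WithLp.toLp 2 ![3/2, -Real.sqrt 3 / 2]

/-- Second basis vector of the triangular lattice. -/
noncomputable def ell2 : EuclideanSpace ℝ (Fin 2) := WithLp.toLp 2 ![3/2, Real.sqrt 3 / 2]

/-- The function `Ω(k) = 1 + e^{-i k·ℓ₁} + e^{-i k·ℓ₂}`. -/
noncomputable def Omega (k : EuclideanSpace ℝ (Fin 2)) : ℂ :=
  1 + Complex.exp (-Complex.I * (dot k ell1)) + Complex.exp (-Complex.I * (dot k ell2))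

/-- The Fermi points `k_F^±`, parametrized by the sign `s = ±1`. -/
noncomputable def kF (s : ℝ) : EuclideanSpace ℝ (Fin 2) :=
  WithLp.toLp 2 ![2 * π / 3, s * (2 * π / (3 * Real.sqrt 3))]

/-- The Bloch Hamiltonian of graphene with hopping parameter `t`. -/
noncomputable def blochH (t : ℝ) (k : EuclideanSpace ℝ (Fin 2)) : Matrix (Fin 2) (Fin 2) ℂ :=
  !![0, -t * (starRingEnd ℂ) (Omega k); -t * Omega k, 0]

lemma exp_neg_I_real (θ : ℝ) :
    Complex.exp (-Complex.I * θ) = (Real.cos θ : ℂ) - (Real.sin θ : ℂ) * Complex.I := by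
  rw [show -Complex.I * (θ:ℂ) = ((-θ : ℝ) : ℂ) * Complex.I by push_cast; ring,
    Complex.exp_mul_I, ← Complex.ofReal_cos, ← Complex.ofReal_sin, Real.cos_neg, Real.sin_neg]
  push_cast; ring

lemma omega_lower {s : ℝ} (hs : s = 1 ∨ s = -1) (k' : EuclideanSpace ℝ (Fin 2))
    (hk : ‖k'‖ ≤ 1/12) : ‖k'‖ ≤ ‖Omega (kF s + k')‖ := by
  have hσ : s * s = 1 := by rcases hs with h | h <;> rw [h] <;> norm_num
  set a : ℝ := k' 0 with ha
  set b : ℝ := k' 1 with hb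
  have s3 : Real.sqrt 3 * Real.sqrt 3 = 3 := Real.mul_self_sqrt (by norm_num)
  have s3pos : (0:ℝ) < Real.sqrt 3 := Real.sqrt_pos.2 (by norm_num)
  set x1 : ℝ := 3/2 * a - Real.sqrt 3 / 2 * b with hx1
  set x2 : ℝ := 3/2 * a + Real.sqrt 3 / 2 * b with hx2
  set n : ℝ := ‖k'‖ with hn
  have hn0 : 0 ≤ n := norm_nonneg _
  have hn2 : n ^ 2 = a ^ 2 + b ^ 2 := by
    rw [hn, show ‖k'‖ = Real.sqrt (‖k' 0‖^2 + ‖k' 1‖^2) by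
        rw [EuclideanSpace.norm_eq]; congr 1; exact Fin.sum_univ_two _,
      Real.sq_sqrt (by positivity)]
    simp [Real.norm_eq_abs, sq_abs, ← ha, ← hb]
  -- dot products
  have hd1 : dot (kF s + k') ell1 = (π - s * (π/3)) + x1 := by
    simp only [dot, kF, ell1, PiLp.add_apply, PiLp.toLp_apply, WithLp.ofLp_toLp, Matrix.cons_val_zero, Matrix.cons_val_one,
      Matrix.head_cons, hx1, ← ha, ← hb]
    field_simp
    ring
  have hd2 : dot (kF s + k') ell2 = (π + s * (π/3)) + x2 := by
    simp only [dot, kF, ell2, PiLp.add_apply, PiLp.toLp_apply, WithLp.ofLp_toLp, Matrix.cons_val_zero, Matrix.cons_val_one,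
      Matrix.head_cons, hx2, ← ha, ← hb]
    field_simp
    ring
  clear_value a b x1 x2 n
  -- the root of unity ω
  set ω : ℂ := ((-(1/2) : ℝ) : ℂ) + ((-(s * Real.sqrt 3 / 2) : ℝ) : ℂ) * Complex.I with hω
  set ω' : ℂ := ((-(1/2) : ℝ) : ℂ) + (((s * Real.sqrt 3 / 2) : ℝ) : ℂ) * Complex.I with hω'
  have habsω : ‖ω‖ = 1 := by
    have h2 : ‖ω‖ ^ 2 = 1 := by
      rw [Complex.sq_norm, hω, Complex.normSq_add_mul_I]
      linear_combination (s*s/4) * s3 + (3/4) * hσ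
    rw [← Real.sqrt_sq (norm_nonneg ω), h2, Real.sqrt_one]
  have habsω' : ‖ω'‖ = 1 := by
    have h2 : ‖ω'‖ ^ 2 = 1 := by
      rw [Complex.sq_norm, hω', Complex.normSq_add_mul_I]
      linear_combination (s*s/4) * s3 + (3/4) * hσ
    rw [← Real.sqrt_sq (norm_nonneg ω'), h2, Real.sqrt_one]
  have hcos : Real.cos (s * (π/3)) = 1/2 := by
    rcases hs with h | h <;> simp [h, Real.cos_pi_div_three]
  have hsin : Real.sin (s * (π/3)) = s * (Real.sqrt 3 / 2) := by
    rcases hs with h | h <;> simp [h, Real.sin_pi_div_three]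
  have he1 : Complex.exp (-Complex.I * ((π - s * (π/3) : ℝ) : ℂ)) = ω := by
    rw [exp_neg_I_real, Real.cos_pi_sub, Real.sin_pi_sub, hcos, hsin, hω]
    push_cast; ring
  have he2 : Complex.exp (-Complex.I * ((π + s * (π/3) : ℝ) : ℂ)) = ω' := by
    rw [show π + s * (π/3) = π - (-(s * (π/3))) by ring, exp_neg_I_real, Real.cos_pi_sub,
      Real.sin_pi_sub, Real.cos_neg, Real.sin_neg, hcos, hsin, hω']
    push_cast; ring
  have hOmega : Omega (kF s + k')
      = 1 + ω * Complex.exp (-Complex.I * (x1 : ℂ)) + ω' * Complex.exp (-Complex.I * (x2 : ℂ)) := by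
    rw [Omega, hd1, hd2]
    rw [show (-Complex.I) * (((π - s * (π/3)) + x1 : ℝ) : ℂ)
        = (-Complex.I * ((π - s * (π/3) : ℝ) : ℂ)) + (-Complex.I * ((x1 : ℝ) : ℂ)) by
      push_cast; ring]
    rw [show (-Complex.I) * (((π + s * (π/3)) + x2 : ℝ) : ℂ)
        = (-Complex.I * ((π + s * (π/3) : ℝ) : ℂ)) + (-Complex.I * ((x2 : ℝ) : ℂ)) by
      push_cast; ring]
    rw [Complex.exp_add, Complex.exp_add, he1, he2]
  set u1 : ℂ := Complex.exp (-Complex.I * (x1 : ℂ)) - 1 + Complex.I * (x1 : ℂ) with hu1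
  set u2 : ℂ := Complex.exp (-Complex.I * (x2 : ℂ)) - 1 + Complex.I * (x2 : ℂ) with hu2
  have hsum0 : (1 : ℂ) + ω + ω' = 0 := by rw [hω, hω']; push_cast; ring
  have hiden : Omega (kF s + k')
      = (-Complex.I) * (ω * (x1 : ℂ) + ω' * (x2 : ℂ)) + (ω * u1 + ω' * u2) := by
    rw [hOmega, hu1, hu2]
    linear_combination hsum0
  -- the linear term has absolute value (3/2) n
  have hL : ‖ω * (x1 : ℂ) + ω' * (x2 : ℂ)‖ = 3/2 * n := by
    have hrepr : ω * (x1 : ℂ) + ω' * (x2 : ℂ)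
        = ((-(x1 + x2)/2 : ℝ) : ℂ) + (((s * Real.sqrt 3 / 2) * (x2 - x1) : ℝ) : ℂ) * Complex.I := by
      rw [hω, hω']; push_cast; ring
    have hdiff : x2 - x1 = Real.sqrt 3 * b := by rw [hx1, hx2]; ring
    have hsumx : x1 + x2 = 3 * a := by rw [hx1, hx2]; ring
    have hns : Complex.normSq (((-(x1 + x2)/2 : ℝ) : ℂ)
        + (((s * Real.sqrt 3 / 2) * (x2 - x1) : ℝ) : ℂ) * Complex.I) = (3/2 * n)^2 := by
      rw [Complex.normSq_add_mul_I, hdiff, hsumx]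
      linear_combination (-9/4) * hn2 + (9*b^2/4) * hσ
        + (s*s*b^2*(Real.sqrt 3 * Real.sqrt 3 + 3)/4) * s3
    rw [hrepr, Complex.norm_def, hns, Real.sqrt_sq (by positivity)]
  have hx1sq : x1 ^ 2 ≤ 3 * n ^ 2 := by
    have h : 3 * n ^ 2 - x1 ^ 2 = 3/4 * (a + Real.sqrt 3 * b)^2 := by
      rw [hx1]; linear_combination 3 * hn2 - b^2 * s3
    linarith [h, sq_nonneg (a + Real.sqrt 3 * b)]
  have hx2sq : x2 ^ 2 ≤ 3 * n ^ 2 := by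
    have h : 3 * n ^ 2 - x2 ^ 2 = 3/4 * (a - Real.sqrt 3 * b)^2 := by
      rw [hx2]; linear_combination 3 * hn2 - b^2 * s3
    linarith [h, sq_nonneg (a - Real.sqrt 3 * b)]
  have hxabs : ∀ x : ℝ, x ^ 2 ≤ 3 * n ^ 2 → |x| ≤ 1 := by
    intro x hx
    have hn2b : n^2 ≤ 1/144 := by
      rw [sq]
      calc n * n ≤ 1/12 * (1/12) := mul_le_mul hk hk hn0 (by norm_num)
        _ = 1/144 := by norm_num
    have hx1' : x ^ 2 ≤ 1 := by linarith
    exact (sq_le_one_iff_abs_le_one x).mp hx1'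
  have hu : ∀ x : ℝ, x ^ 2 ≤ 3 * n ^ 2 →
      ‖Complex.exp (-Complex.I * (x : ℂ)) - 1 + Complex.I * (x : ℂ)‖ ≤ x ^ 2 := by
    intro x hx
    have hz : ‖-Complex.I * (x : ℂ)‖ = |x| := by
      simp [norm_mul, Complex.norm_real]
    have h1 : ‖-Complex.I * (x : ℂ)‖ ≤ 1 := by rw [hz]; exact hxabs x hx
    have := Complex.norm_exp_sub_one_sub_id_le h1
    rw [hz] at this
    calc ‖Complex.exp (-Complex.I * (x : ℂ)) - 1 + Complex.I * (x : ℂ)‖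
        = ‖Complex.exp (-Complex.I * (x : ℂ)) - 1 - (-Complex.I * (x : ℂ))‖ := by
          ring_nf
      _ ≤ |x| ^ 2 := this
      _ = x ^ 2 := sq_abs x
  have hE : ‖ω * u1 + ω' * u2‖ ≤ x1 ^ 2 + x2 ^ 2 := by
    calc ‖ω * u1 + ω' * u2‖ ≤ ‖ω * u1‖ + ‖ω' * u2‖ :=
          norm_add_le _ _
      _ = ‖u1‖ + ‖u2‖ := by rw [norm_mul, norm_mul, habsω, habsω']; ring
      _ ≤ x1 ^ 2 + x2 ^ 2 := add_le_add (hu x1 hx1sq) (hu x2 hx2sq)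
  have hLfull : ‖(-Complex.I) * (ω * (x1 : ℂ) + ω' * (x2 : ℂ))‖ = 3/2 * n := by
    rw [norm_mul]; simp [Complex.norm_I, hL]
  have hrev : 3/2 * n - (x1 ^ 2 + x2 ^ 2) ≤ ‖Omega (kF s + k')‖ := by
    have h1 : ‖(-Complex.I) * (ω * (x1 : ℂ) + ω' * (x2 : ℂ))‖
        ≤ ‖Omega (kF s + k')‖ + ‖ω * u1 + ω' * u2‖ := by
      calc ‖(-Complex.I) * (ω * (x1 : ℂ) + ω' * (x2 : ℂ))‖
          = ‖Omega (kF s + k') + -(ω * u1 + ω' * u2)‖ := by rw [hiden]; ring_nf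
        _ ≤ ‖Omega (kF s + k')‖ + ‖-(ω * u1 + ω' * u2)‖ :=
            norm_add_le _ _
        _ = ‖Omega (kF s + k')‖ + ‖ω * u1 + ω' * u2‖ := by rw [norm_neg]
    rw [hLfull] at h1
    linarith
  have hprod : 0 ≤ n * (1/12 - n) := mul_nonneg hn0 (by linarith)
  have h6 : x1 ^ 2 + x2 ^ 2 ≤ n / 2 := by nlinarith [hprod]
  linarith [hrev, h6]

lemma offdiag_clm_norm_le (c : ℂ) :
    ‖Matrix.toEuclideanCLM (𝕜 := ℂ) !![0, (starRingEnd ℂ) c; c, 0]‖ ≤ ‖c‖ := by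
  apply ContinuousLinearMap.opNorm_le_bound _ (norm_nonneg c)
  intro v
  have hv : ∀ (i : Fin 2), (Matrix.toEuclideanCLM (𝕜 := ℂ) !![0, (starRingEnd ℂ) c; c, 0] v) i
      = Matrix.mulVec !![0, (starRingEnd ℂ) c; c, 0] v i := fun i => rfl
  have h0 : (Matrix.toEuclideanCLM (𝕜 := ℂ) !![0, (starRingEnd ℂ) c; c, 0] v) 0
      = (starRingEnd ℂ) c * v 1 := by
    rw [hv]; simp [Matrix.mulVec, dotProduct, Fin.sum_univ_two]
  have h1 : (Matrix.toEuclideanCLM (𝕜 := ℂ) !![0, (starRingEnd ℂ) c; c, 0] v) 1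
      = c * v 0 := by
    rw [hv]; simp [Matrix.mulVec, dotProduct, Fin.sum_univ_two]
  have hnv : ‖v‖ = Real.sqrt (‖v 0‖ ^ 2 + ‖v 1‖ ^ 2) := by
    rw [EuclideanSpace.norm_eq]; congr 1
    rw [Fin.sum_univ_two]
  have hAv : ‖Matrix.toEuclideanCLM (𝕜 := ℂ) !![0, (starRingEnd ℂ) c; c, 0] v‖
      = Real.sqrt (‖(starRingEnd ℂ) c * v 1‖ ^ 2 + ‖c * v 0‖ ^ 2) := by
    rw [EuclideanSpace.norm_eq]; congr 1
    rw [Fin.sum_univ_two, h0, h1]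
  rw [hAv, hnv]
  have key : ‖(starRingEnd ℂ) c * v 1‖ ^ 2 + ‖c * v 0‖ ^ 2
      = (‖c‖) ^ 2 * (‖v 0‖ ^ 2 + ‖v 1‖ ^ 2) := by
    simp [norm_mul, Complex.norm_conj]; ring
  rw [key, Real.sqrt_mul (sq_nonneg _), Real.sqrt_sq (norm_nonneg c)]

set_option maxHeartbeats 1000000 in
/-- Singularity bound for the free graphene propagator at half filling:
near each Fermi point, `i k₀ 𝟙 − Ĥ⁰(k_F^± + k')` is invertible for `(k₀, k') ≠ (0,0)`, and the
operator norm of its inverse is bounded by `C (k₀² + |k'|²)^{-1/2}`. -/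
theorem propagator_singularity_bound (t : ℝ) (ht : 0 < t) :
    ∃ ε > (0:ℝ), ∃ C > (0:ℝ), ∀ s : ℝ, (s = 1 ∨ s = -1) →
      ∀ k₀ : ℝ, ∀ k' : EuclideanSpace ℝ (Fin 2), ‖k'‖ ≤ ε → (k₀ ≠ 0 ∨ k' ≠ 0) →
        IsUnit ((Complex.I * (k₀ : ℝ)) • (1 : Matrix (Fin 2) (Fin 2) ℂ)
            - blochH t (kF s + k')) ∧
        ‖Matrix.toEuclideanCLM (𝕜 := ℂ)
            (((Complex.I * (k₀ : ℝ)) • (1 : Matrix (Fin 2) (Fin 2) ℂ)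
              - blochH t (kF s + k'))⁻¹)‖
          ≤ C / Real.sqrt (k₀ ^ 2 + ‖k'‖ ^ 2) := by
  have hmin : 0 < min 1 t := lt_min one_pos ht
  have hm0 : 0 ≤ min 1 t := hmin.le
  refine ⟨1/12, by norm_num, Real.sqrt 2 / min 1 t,
    div_pos (Real.sqrt_pos.2 (by norm_num)) hmin, ?_⟩
  intro s hs k₀ k' hk' hne
  set Ω : ℂ := Omega (kF s + k') with hΩ
  set A : ℝ := ‖Ω‖ with hA
  have hA0 : 0 ≤ A := norm_nonneg _
  have hAn : ‖k'‖ ≤ A := omega_lower hs k' hk'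
  set n : ℝ := ‖k'‖ with hn
  have hn0 : 0 ≤ n := norm_nonneg _
  have hpos : 0 < k₀ ^ 2 + n ^ 2 := by
    rcases hne with h | h
    · have h0 : 0 < k₀ ^ 2 := by positivity
      nlinarith [sq_nonneg n]
    · have h0 : 0 < n := by rw [hn]; exact norm_pos_iff.2 h
      nlinarith [sq_nonneg k₀]
  set D : ℝ := k₀ ^ 2 + t ^ 2 * A ^ 2 with hD
  have hDge : (min 1 t) ^ 2 * (k₀ ^ 2 + n ^ 2) ≤ D := by
    have hm1 : min 1 t ≤ 1 := min_le_left _ _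
    have hm2 : min 1 t ≤ t := min_le_right _ _
    have hAn2 : n ^ 2 ≤ A ^ 2 := by nlinarith
    have hm1sq : (min 1 t) ^ 2 ≤ 1 := by nlinarith
    have ht2 : (min 1 t) ^ 2 ≤ t ^ 2 := by nlinarith
    have e1 : (min 1 t) ^ 2 * k₀ ^ 2 ≤ 1 * k₀ ^ 2 :=
      mul_le_mul_of_nonneg_right hm1sq (sq_nonneg k₀)
    have e2 : (min 1 t) ^ 2 * n ^ 2 ≤ t ^ 2 * n ^ 2 :=
      mul_le_mul_of_nonneg_right ht2 (sq_nonneg n)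
    have e3 : t ^ 2 * n ^ 2 ≤ t ^ 2 * A ^ 2 :=
      mul_le_mul_of_nonneg_left hAn2 (sq_nonneg t)
    nlinarith [e1, e2, e3]
  have hDpos : 0 < D :=
    lt_of_lt_of_le (mul_pos (pow_pos hmin 2) hpos) hDge
  set M : Matrix (Fin 2) (Fin 2) ℂ :=
    (Complex.I * (k₀ : ℝ)) • (1 : Matrix (Fin 2) (Fin 2) ℂ) - blochH t (kF s + k') with hM
  have h00 : M 0 0 = Complex.I * k₀ := by simp [hM, blochH]
  have h01 : M 0 1 = t * (starRingEnd ℂ) Ω := by simp [hM, blochH, ← hΩ]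
  have h10 : M 1 0 = t * Ω := by simp [hM, blochH, ← hΩ]
  have h11 : M 1 1 = Complex.I * k₀ := by simp [hM, blochH]
  have hdet : M.det = -((D : ℝ) : ℂ) := by
    rw [Matrix.det_fin_two, h00, h01, h10, h11, hD]
    have hc : (starRingEnd ℂ) Ω * Ω = ((A ^ 2 : ℝ) : ℂ) := by
      rw [hA, mul_comm, Complex.mul_conj, Complex.normSq_eq_norm_sq]
    push_cast at hc ⊢
    linear_combination (-(t:ℂ) ^ 2) * hc + (k₀:ℂ) ^ 2 * Complex.I_sq
  have hdet0 : M.det ≠ 0 := by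
    rw [hdet]
    exact neg_ne_zero.2 (Complex.ofReal_ne_zero.2 hDpos.ne')
  have hunit : IsUnit M := (Matrix.isUnit_iff_isUnit_det M).2 (isUnit_iff_ne_zero.2 hdet0)
  refine ⟨hunit, ?_⟩
  have hadj : M.adjugate
      = (Complex.I * (k₀ : ℝ)) • (1 : Matrix (Fin 2) (Fin 2) ℂ) + blochH t (kF s + k') := by
    rw [Matrix.adjugate_fin_two]
    ext i j
    fin_cases i <;> fin_cases j <;> simp [hM, blochH]
  have hinv : M⁻¹ = (-((D : ℝ) : ℂ))⁻¹ •
      ((Complex.I * (k₀ : ℝ)) • (1 : Matrix (Fin 2) (Fin 2) ℂ) + blochH t (kF s + k')) := by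
    rw [Matrix.inv_def, Ring.inverse_eq_inv', hdet, hadj]
  rw [hinv, map_smul, map_add, map_smul, map_one]
  have hb : ‖Matrix.toEuclideanCLM (𝕜 := ℂ) (blochH t (kF s + k'))‖ ≤ t * A := by
    have hform : blochH t (kF s + k')
        = !![0, (starRingEnd ℂ) (-(t:ℂ) * Ω); -(t:ℂ) * Ω, 0] := by
      ext i j
      fin_cases i <;> fin_cases j <;>
        simp [blochH, ← hΩ, map_mul, Complex.conj_ofReal]
    rw [hform]
    calc ‖Matrix.toEuclideanCLM (𝕜 := ℂ) !![0, (starRingEnd ℂ) (-(t:ℂ) * Ω); -(t:ℂ) * Ω, 0]‖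
        ≤ ‖-(t:ℂ) * Ω‖ := offdiag_clm_norm_le _
      _ = t * A := by
          rw [norm_mul, norm_neg, Complex.norm_real, Real.norm_eq_abs, abs_of_pos ht, ← hA]
  have hnorm1 : ‖(Complex.I * ((k₀ : ℝ) : ℂ)) •
      (1 : EuclideanSpace ℂ (Fin 2) →L[ℂ] EuclideanSpace ℂ (Fin 2))‖ ≤ |k₀| := by
    have h1 : ‖Complex.I * ((k₀ : ℝ) : ℂ)‖ = |k₀| := by
      simp [norm_mul, Complex.norm_real]
    calc ‖(Complex.I * ((k₀ : ℝ) : ℂ)) •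
            (1 : EuclideanSpace ℂ (Fin 2) →L[ℂ] EuclideanSpace ℂ (Fin 2))‖
        ≤ ‖Complex.I * ((k₀ : ℝ) : ℂ)‖ *
            ‖(1 : EuclideanSpace ℂ (Fin 2) →L[ℂ] EuclideanSpace ℂ (Fin 2))‖ := ContinuousLinearMap.opNorm_smul_le _ _
      _ ≤ |k₀| * 1 := by
          rw [h1]
          exact mul_le_mul_of_nonneg_left ContinuousLinearMap.norm_id_le (abs_nonneg _)
      _ = |k₀| := mul_one _
  have hDnorm : ‖(-((D : ℝ) : ℂ))⁻¹‖ = D⁻¹ := by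
    rw [norm_inv]
    simp [norm_neg, Complex.norm_real, abs_of_pos hDpos]
  have hsP : 0 < Real.sqrt (k₀ ^ 2 + n ^ 2) := Real.sqrt_pos.2 hpos
  have hsD : 0 < Real.sqrt D := Real.sqrt_pos.2 hDpos
  have h1 : |k₀| + t * A ≤ Real.sqrt 2 * Real.sqrt D := by
    rw [← Real.sqrt_mul (by norm_num : (0:ℝ) ≤ 2),
      show |k₀| + t * A = Real.sqrt ((|k₀| + t * A) ^ 2) from
        (Real.sqrt_sq (by positivity)).symm]
    apply Real.sqrt_le_sqrt
    rw [hD]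
    nlinarith [sq_nonneg (|k₀| - t * A), _root_.sq_abs k₀]
  have h3 : D⁻¹ * (Real.sqrt 2 * Real.sqrt D) = Real.sqrt 2 / Real.sqrt D := by
    have hDD : Real.sqrt D * Real.sqrt D = D := Real.mul_self_sqrt hDpos.le
    rw [eq_div_iff hsD.ne']
    calc D⁻¹ * (Real.sqrt 2 * Real.sqrt D) * Real.sqrt D
        = Real.sqrt 2 * (Real.sqrt D * Real.sqrt D) * D⁻¹ := by ring
      _ = Real.sqrt 2 * D * D⁻¹ := by rw [hDD]
      _ = Real.sqrt 2 := by field_simp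
  have hle : min 1 t * Real.sqrt (k₀ ^ 2 + n ^ 2) ≤ Real.sqrt D := by
    calc min 1 t * Real.sqrt (k₀ ^ 2 + n ^ 2)
        = Real.sqrt ((min 1 t) ^ 2 * (k₀ ^ 2 + n ^ 2)) := by
          rw [Real.sqrt_mul (sq_nonneg _), Real.sqrt_sq hm0]
      _ ≤ Real.sqrt D := Real.sqrt_le_sqrt hDge
  have h4 : Real.sqrt 2 / Real.sqrt D
      ≤ Real.sqrt 2 / (min 1 t * Real.sqrt (k₀ ^ 2 + n ^ 2)) :=
    div_le_div_of_nonneg_left (Real.sqrt_nonneg 2) (mul_pos hmin hsP) hle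
  calc ‖(-((D : ℝ) : ℂ))⁻¹ • ((Complex.I * ((k₀ : ℝ) : ℂ)) •
          (1 : EuclideanSpace ℂ (Fin 2) →L[ℂ] EuclideanSpace ℂ (Fin 2))
          + Matrix.toEuclideanCLM (𝕜 := ℂ) (blochH t (kF s + k')))‖
      ≤ ‖(-((D : ℝ) : ℂ))⁻¹‖ * ‖(Complex.I * ((k₀ : ℝ) : ℂ)) •
          (1 : EuclideanSpace ℂ (Fin 2) →L[ℂ] EuclideanSpace ℂ (Fin 2))
          + Matrix.toEuclideanCLM (𝕜 := ℂ) (blochH t (kF s + k'))‖ := ContinuousLinearMap.opNorm_smul_le _ _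
    _ ≤ D⁻¹ * (|k₀| + t * A) := by
        rw [hDnorm]
        refine mul_le_mul_of_nonneg_left ?_ (inv_nonneg.2 hDpos.le)
        calc ‖(Complex.I * ((k₀ : ℝ) : ℂ)) •
                (1 : EuclideanSpace ℂ (Fin 2) →L[ℂ] EuclideanSpace ℂ (Fin 2))
                + Matrix.toEuclideanCLM (𝕜 := ℂ) (blochH t (kF s + k'))‖
            ≤ ‖(Complex.I * ((k₀ : ℝ) : ℂ)) •
                (1 : EuclideanSpace ℂ (Fin 2) →L[ℂ] EuclideanSpace ℂ (Fin 2))‖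
              + ‖Matrix.toEuclideanCLM (𝕜 := ℂ) (blochH t (kF s + k'))‖ := norm_add_le _ _
          _ ≤ |k₀| + t * A := add_le_add hnorm1 hb
    _ ≤ D⁻¹ * (Real.sqrt 2 * Real.sqrt D) :=
        mul_le_mul_of_nonneg_left h1 (inv_nonneg.2 hDpos.le)
    _ = Real.sqrt 2 / Real.sqrt D := h3
    _ ≤ Real.sqrt 2 / (min 1 t * Real.sqrt (k₀ ^ 2 + n ^ 2)) := h4
    _ = Real.sqrt 2 / min 1 t / Real.sqrt (k₀ ^ 2 + n ^ 2) := by rw [div_div]
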